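/- For Ω(u) = (2/π)(u·arcsin(u/2) + √(4-u²)) it holds that Ω(u) ≥ |u| for all u ∈ [-2,2], with equality if and only if |u| = 2. -/

import Mathlib

noncomputable def Omega (u : ℝ) : ℝ :=
  (2 / Real.pi) * (u * Real.arcsin (u / 2) + Real.sqrt (4 - u ^ 2))

lemma Omega_cont : Continuous Omega := by
  unfold Omega
  exact continuous_const.mul (((continuous_id.mul (Real.continuous_arcsin.comp (continuous_id.div_const 2)))).add ((continuous_const.sub (continuous_pow 2)).sqrt))

lemma hasDerivAt_Omega {u : ℝ} (h1 : -2 < u) (h2 : u < 2) :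
    HasDerivAt Omega ((2 / Real.pi) * Real.arcsin (u / 2)) u := by
  have h4 : (0:ℝ) < 4 - u ^ 2 := by nlinarith
  have hs : Real.sqrt (4 - u ^ 2) ≠ 0 := by positivity
  have hsq : Real.sqrt (1 - (u / 2) ^ 2) = Real.sqrt (4 - u ^ 2) / 2 := by
    rw [show (1 - (u/2)^2) = (4 - u^2) / 4 by ring,
      Real.sqrt_div (by linarith) 4,
      show Real.sqrt 4 = 2 by
        rw [show (4:ℝ) = 2^2 by norm_num, Real.sqrt_sq (by norm_num)]]
  have harc : HasDerivAt (fun x : ℝ => Real.arcsin (x / 2))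
      (1 / Real.sqrt (1 - (u/2)^2) * (1/2)) u := by
    have h := Real.hasDerivAt_arcsin (x := u/2) (by intro h; linarith [congrArg (· * 2) h])
      (by intro h; linarith [congrArg (· * 2) h])
    exact h.comp u ((hasDerivAt_id u).div_const 2)
  have hsqrt : HasDerivAt (fun x : ℝ => Real.sqrt (4 - x ^ 2))
      (1 / (2 * Real.sqrt (4 - u ^ 2)) * (-(2 * u))) u := by
    have hin : HasDerivAt (fun x : ℝ => 4 - x ^ 2) (-(2 * u)) u := by
      have := ((hasDerivAt_pow 2 u).const_sub 4)
      simpa using this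
    exact (Real.hasDerivAt_sqrt (ne_of_gt h4)).comp u hin
  have hmain : HasDerivAt (fun x : ℝ => (2 / Real.pi) *
      (x * Real.arcsin (x / 2) + Real.sqrt (4 - x ^ 2)))
      ((2 / Real.pi) * ((1 * Real.arcsin (u/2) + u * (1 / Real.sqrt (1 - (u/2)^2) * (1/2)))
        + 1 / (2 * Real.sqrt (4 - u ^ 2)) * (-(2 * u)))) u :=
    (((hasDerivAt_id u).mul harc).add hsqrt).const_mul _
  have : ((2 / Real.pi) * ((1 * Real.arcsin (u/2) + u * (1 / Real.sqrt (1 - (u/2)^2) * (1/2)))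
        + 1 / (2 * Real.sqrt (4 - u ^ 2)) * (-(2 * u)))) = (2 / Real.pi) * Real.arcsin (u / 2) := by
    rw [hsq]; field_simp; ring
  rw [← this]
  exact hmain

lemma Omega_two : Omega 2 = 2 := by
  unfold Omega
  norm_num [Real.arcsin_one]
  field_simp

lemma Omega_even (u : ℝ) : Omega (-u) = Omega u := by
  unfold Omega
  rw [show (-u) / 2 = -(u/2) by ring, Real.arcsin_neg]
  ring_nf

lemma key : ∀ v ∈ Set.Icc (0:ℝ) 2, v ≤ Omega v ∧ (Omega v = v ↔ v = 2) := by
  have hanti : StrictAntiOn (fun u => Omega u - u) (Set.Icc (0:ℝ) 2) := by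
    apply strictAntiOn_of_deriv_neg (convex_Icc 0 2)
      ((Omega_cont.sub continuous_id').continuousOn)
    intro x hx
    rw [interior_Icc] at hx
    have hd : HasDerivAt (fun u => Omega u - u) ((2 / Real.pi) * Real.arcsin (x / 2) - 1) x :=
      (hasDerivAt_Omega (by linarith [hx.1]) hx.2).sub (hasDerivAt_id x)
    rw [show (Omega - fun x : ℝ => x) = (fun u => Omega u - u) from rfl, hd.deriv]
    have harc : Real.arcsin (x / 2) < Real.pi / 2 :=
      Real.arcsin_lt_pi_div_two.mpr (by linarith [hx.2])
    have hpi := Real.pi_pos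
    have : (2 / Real.pi) * Real.arcsin (x / 2) < (2 / Real.pi) * (Real.pi / 2) := by
      apply mul_lt_mul_of_pos_left harc (by positivity)
    calc (2 / Real.pi) * Real.arcsin (x / 2) - 1 < (2 / Real.pi) * (Real.pi / 2) - 1 := by linarith
      _ = 0 := by field_simp; ring
  intro v hv
  rcases eq_or_lt_of_le hv.2 with heq | hlt
  · subst heq
    exact ⟨by rw [Omega_two], by rw [Omega_two]⟩
  · have h := hanti hv (Set.mem_Icc.mpr ⟨by norm_num, le_refl 2⟩) hlt
    simp only [Omega_two, sub_self] at h
    constructor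
    · linarith
    · constructor
      · intro he; linarith
      · intro he; exact absurd he (ne_of_lt hlt)

/-- `Ω(u) ≥ |u|` for `u ∈ [-2,2]`, with equality iff `|u| = 2`. -/
theorem omega_ge_abs :
    ∀ u ∈ Set.Icc (-2 : ℝ) 2, |u| ≤ Omega u ∧ (Omega u = |u| ↔ |u| = 2) := by
  intro u hu
  have habs : Omega |u| = Omega u := by
    rcases abs_cases u with ⟨h, _⟩ | ⟨h, _⟩
    · rw [h]
    · rw [h, Omega_even]
  have hmem : |u| ∈ Set.Icc (0:ℝ) 2 := ⟨abs_nonneg u, abs_le.mpr ⟨hu.1, hu.2⟩⟩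
  obtain ⟨h1, h2⟩ := key |u| hmem
  rw [habs] at h1 h2
  exact ⟨h1, h2⟩
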